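/- Let n ≥ 1 and let k₁, …, k_n be density kernels with rectangular supports F₁ × G₁, …, F_n × G_n, and suppose there are numbers κ_m ≥ 1 with k_m(s₁,t₁)k_m(s₂,t₂) ≤ κ_m² k_m(s₂,t₁)k_m(s₁,t₂) for all s₁, s₂ ∈ F_m, t₁, t₂ ∈ G_m, for each 1 ≤ m ≤ n. Define K_m(s, E) = ∫_E k_m(s,t) λ(dt), and recursively K^{n,n} = K_n and K^{m−1,n}(s, E) = ∫_S k_{m−1}(s,t) K^{m,n}(t, E) λ(dt) for m = n, n−1, …, 2, and set Kⁿ = K^{1,n}. Suppose Kⁿ(s, S) > 0 for all s ∈ F₁. Then for any two finite nonnegative measures x, y on (S, 𝓕) with x(F₁) > 0 and y(F₁) > 0, writing xKⁿ for the measure E ↦ ∫_S Kⁿ(s, E) x(ds) and ‖xKⁿ‖ = xKⁿ(S), one has δ_TV( xKⁿ/‖xKⁿ‖ , yKⁿ/‖yKⁿ‖ ) ≤ 2 ∏_{m=1}^n (κ_m − 1)/(κ_m + 1). -/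

import Mathlib

open MeasureTheory
open scoped NNReal ENNReal

/-- Composition of a finite list of density kernels against the base measure `lam`,
restricted to a set `E` in the last coordinate:
`compKer lam [k₁, …, k_n] s E = ∫ k₁(s,t₁) ⋯ ∫ k_n(t_{n-1}, t_n) 1_E(t_n) λ(dt_n) ⋯ λ(dt₁)`,
so that `compKer lam [k₁, …, k_n] = Kⁿ = K^{1,n}` of the recursive definition. -/
noncomputable def compKer {S : Type*} [MeasurableSpace S] (lam : Measure S) :
    List (S → S → ℝ≥0) → S → Set S → ℝ≥0∞
  | [] => fun s E => E.indicator (fun _ => (1 : ℝ≥0∞)) s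
  | kk :: ks => fun s E => ∫⁻ t, (kk s t : ℝ≥0∞) * compKer lam ks t E ∂lam


noncomputable def Dsup {S : Type*} [MeasurableSpace S] (μ ν : Measure S) : ℝ≥0∞ :=
  ⨆ (E : Set S) (_ : MeasurableSet E), μ E - ν E

lemma le_Dsup {S : Type*} [MeasurableSpace S] {μ ν : Measure S} {E : Set S}
    (hE : MeasurableSet E) : μ E - ν E ≤ Dsup μ ν :=
  le_iSup₂ (f := fun (E : Set S) (_ : MeasurableSet E) => μ E - ν E) E hE

lemma Dsup_le {S : Type*} [MeasurableSpace S] {μ ν : Measure S} {c : ℝ≥0∞}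
    (h : ∀ E : Set S, MeasurableSet E → μ E - ν E ≤ c) : Dsup μ ν ≤ c :=
  iSup₂_le h

lemma key_real {p q r s a κ : ℝ} (hκ : 1 ≤ κ) (hp : 0 ≤ p) (hq : 0 ≤ q) (hr : 0 ≤ r)
    (hs : 0 ≤ s) (hpq : p + q = a) (hrs : r + s = a)
    (hstar : p * s ≤ κ ^ 2 * (r * q)) : p - r ≤ (κ - 1) / (κ + 1) * a := by
  have hκ1 : (0:ℝ) < κ + 1 := by linarith
  rw [div_mul_eq_mul_div, le_div_iff₀ hκ1]
  have key : 2 * a ≤ (κ + 1) * (q + r) := by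
    rcases eq_or_lt_of_le (by nlinarith : (0:ℝ) ≤ 2*a + (κ-1)*(q+r)) with h0 | h0
    · nlinarith
    · by_contra hc
      push_neg at hc
      have h1 : 0 < 2*a - (κ+1)*(q+r) := by linarith
      have hk2 : (0:ℝ) ≤ κ^2 - 1 := by nlinarith
      nlinarith [mul_pos h0 h1, mul_nonneg hk2 (sq_nonneg (q - r))]
  nlinarith

lemma onestep {S : Type*} [MeasurableSpace S] (lam : Measure S) [SigmaFinite lam]
    (w : S → S → ℝ≥0∞) (hw : Measurable fun z : S × S => w z.1 z.2)
    (hwfin : ∀ s t, w s t ≠ ∞)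
    (h : S → ℝ≥0∞) (hh : ∀ s, h s = ∫⁻ t, w s t ∂lam) (hhfin : ∀ s, h s ≠ ∞)
    (κ : ℝ) (hκ : 1 ≤ κ)
    (hcr : ∀ s s' t t', 0 < h s → 0 < h s' →
      w s t * w s' t' ≤ ENNReal.ofReal (κ ^ 2) * (w s' t * w s t'))
    (μ ν : Measure S) [IsFiniteMeasure μ] [IsFiniteMeasure ν]
    (hμ1 : ∫⁻ s, h s ∂μ = 1) (hν1 : ∫⁻ s, h s ∂ν = 1)
    (E : Set S) (hE : MeasurableSet E) :
    (∫⁻ s, ∫⁻ t in E, w s t ∂lam ∂μ) - (∫⁻ s, ∫⁻ t in E, w s t ∂lam ∂ν) ≤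
      ENNReal.ofReal ((κ - 1) / (κ + 1)) * Dsup (μ.withDensity h) (ν.withDensity h) := by
  classical
  have hhm : Measurable h := by
    have : (fun s => ∫⁻ t, w s t ∂lam) = h := funext fun s => (hh s).symm
    rw [← this]; exact hw.lintegral_prod_right'
  set F' : Set S := {s | 0 < h s} with hF'def
  have hF' : MeasurableSet F' := measurableSet_lt measurable_const hhm
  have hzero : ∀ s, s ∉ F' → h s = 0 := by
    intro s hs
    simpa [hF'def, pos_iff_ne_zero] using hs
  set μt := μ.withDensity h with hμt
  set νt := ν.withDensity h with hνt
  -- withDensity only sees F'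
  have hwd : ∀ ρ : Measure S, ρ.withDensity h = (ρ.restrict F').withDensity h := by
    intro ρ
    ext B hB
    rw [withDensity_apply _ hB, withDensity_apply _ hB, Measure.restrict_restrict hB]
    have hind : h = F'.indicator h := by
      funext s; by_cases hs : s ∈ F'
      · simp [Set.indicator_of_mem hs]
      · simp [Set.indicator_of_notMem hs, hzero s hs]
    calc ∫⁻ s in B, h s ∂ρ = ∫⁻ s in B, F'.indicator h s ∂ρ := by rw [← hind]
      _ = ∫⁻ s in F', h s ∂(ρ.restrict B) := lintegral_indicator hF' h
      _ = ∫⁻ s in B ∩ F', h s ∂ρ := by rw [Measure.restrict_restrict hF', Set.inter_comm]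
  -- masses
  have hμtmass : μt Set.univ = 1 := by
    rw [hμt, withDensity_apply _ MeasurableSet.univ, Measure.restrict_univ]; exact hμ1
  have hνtmass : νt Set.univ = 1 := by
    rw [hνt, withDensity_apply _ MeasurableSet.univ, Measure.restrict_univ]; exact hν1
  haveI hμtf : IsFiniteMeasure μt := ⟨by rw [hμtmass]; exact ENNReal.one_lt_top⟩
  haveI hνtf : IsFiniteMeasure νt := ⟨by rw [hνtmass]; exact ENNReal.one_lt_top⟩
  -- Hahn decomposition
  obtain ⟨A, hA, hA1, hA2⟩ := hahn_decomposition (μ := μt) (ν := νt)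
  have hle1 : νt.restrict A ≤ μt.restrict A := by
    refine Measure.le_iff.mpr fun B hB => ?_
    rw [Measure.restrict_apply hB, Measure.restrict_apply hB]
    exact hA1 _ (hB.inter hA) Set.inter_subset_right
  have hle2 : μt.restrict Aᶜ ≤ νt.restrict Aᶜ := by
    refine Measure.le_iff.mpr fun B hB => ?_
    rw [Measure.restrict_apply hB, Measure.restrict_apply hB]
    exact hA2 _ (hB.inter hA.compl) Set.inter_subset_right
  set σ : Measure S := μt.restrict A - νt.restrict A with hσ
  set τ : Measure S := νt.restrict Aᶜ - μt.restrict Aᶜ with hτ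
  have hσadd : σ + νt.restrict A = μt.restrict A := Measure.sub_add_cancel_of_le hle1
  have hτadd : τ + μt.restrict Aᶜ = νt.restrict Aᶜ := Measure.sub_add_cancel_of_le hle2
  haveI : IsFiniteMeasure σ := by
    refine ⟨lt_of_le_of_lt (Measure.le_iff'.mp Measure.sub_le Set.univ) ?_⟩
    exact lt_of_le_of_lt (Measure.le_iff'.mp Measure.restrict_le_self Set.univ) (measure_lt_top _ _)
  haveI : IsFiniteMeasure τ := by
    refine ⟨lt_of_le_of_lt (Measure.le_iff'.mp Measure.sub_le Set.univ) ?_⟩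
    exact lt_of_le_of_lt (Measure.le_iff'.mp Measure.restrict_le_self Set.univ) (measure_lt_top _ _)
  -- the normalized kernel density
  set p : S → S → ℝ≥0∞ := fun s t => w s t * (h s)⁻¹ with hpdef
  have hpm : Measurable fun z : S × S => p z.1 z.2 :=
    hw.mul ((hhm.comp measurable_fst).inv)
  have hpint : ∀ s ∈ F', ∫⁻ t, p s t ∂lam = 1 := by
    intro s hs
    have h0 : h s ≠ 0 := ne_of_gt hs
    rw [hpdef]
    rw [lintegral_mul_const' _ _ (ENNReal.inv_ne_top.mpr h0), ← hh s]
    exact ENNReal.mul_inv_cancel h0 (hhfin s)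
  have hpfin : ∀ s ∈ F', ∀ t, p s t ≠ ∞ := by
    intro s hs t
    exact ENNReal.mul_ne_top (hwfin s t) (ENNReal.inv_ne_top.mpr (ne_of_gt hs))
  set P : Set S → S → ℝ≥0∞ := fun B s => ∫⁻ t in B, p s t ∂lam with hPdef
  have hPm : ∀ B : Set S, Measurable fun s => P B s := fun B =>
    hpm.lintegral_prod_right'
  have hPle : ∀ s ∈ F', ∀ B : Set S, P B s ≤ 1 := fun s hs B =>
    (setLIntegral_le_lintegral _ _).trans (hpint s hs).le
  have hPfin : ∀ s ∈ F', ∀ B : Set S, P B s ≠ ∞ := fun s hs B =>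
    ((hPle s hs B).trans_lt ENNReal.one_lt_top).ne
  -- supports
  have hμtF : ∀ ρ : Measure S, ρ.withDensity h F'ᶜ = 0 := by
    intro ρ
    rw [withDensity_apply _ hF'.compl]
    rw [setLIntegral_congr_fun hF'.compl (fun s hs => hzero s hs)]
    simp
  have hσF : σ F'ᶜ = 0 := by
    refine le_antisymm ?_ zero_le
    calc σ F'ᶜ ≤ μt.restrict A F'ᶜ := Measure.le_iff'.mp Measure.sub_le _
      _ ≤ μt F'ᶜ := Measure.le_iff'.mp Measure.restrict_le_self _
      _ = 0 := hμtF μ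
  have hτF : τ F'ᶜ = 0 := by
    refine le_antisymm ?_ zero_le
    calc τ F'ᶜ ≤ νt.restrict Aᶜ F'ᶜ := Measure.le_iff'.mp Measure.sub_le _
      _ ≤ νt F'ᶜ := Measure.le_iff'.mp Measure.restrict_le_self _
      _ = 0 := hμtF ν
  have aeσ : ∀ᵐ s ∂σ, s ∈ F' := by
    rw [ae_iff]
    convert hσF using 2
    rfl
  have aeτ : ∀ᵐ s ∂τ, s ∈ F' := by
    rw [ae_iff]
    convert hτF using 2
    rfl
  -- the two density functions
  set U : S → ℝ≥0∞ := fun t => ∫⁻ s, p s t ∂σ with hUdef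
  set V : S → ℝ≥0∞ := fun t => ∫⁻ s, p s t ∂τ with hVdef
  have hUm : Measurable U := (hpm.comp measurable_swap).lintegral_prod_right'
  have hVm : Measurable V := (hpm.comp measurable_swap).lintegral_prod_right'
  -- swap lemma
  have hswap : ∀ (ρ : Measure S), IsFiniteMeasure ρ → ∀ B : Set S,
      ∫⁻ t in B, (∫⁻ s, p s t ∂ρ) ∂lam = ∫⁻ s, P B s ∂ρ := by
    intro ρ hρ B
    haveI := hρ
    exact (lintegral_lintegral_swap (μ := lam.restrict B) (ν := ρ)
      (f := fun t s => p s t) ((hpm.comp measurable_swap).aemeasurable)).symm ▸ rfl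
  -- total masses of U and V
  have hU1 : ∫⁻ t, U t ∂lam = σ Set.univ := by
    have := hswap σ inferInstance Set.univ
    rw [Measure.restrict_univ] at this
    rw [hUdef, this]
    have hP1 : ∀ s ∈ F', P Set.univ s = 1 := fun s hs => by
      rw [hPdef]; simp only [Measure.restrict_univ]; exact hpint s hs
    rw [lintegral_congr_ae (aeσ.mono fun s hs => hP1 s hs)]
    simp
  have hV1 : ∫⁻ t, V t ∂lam = τ Set.univ := by
    have := hswap τ inferInstance Set.univ
    rw [Measure.restrict_univ] at this
    rw [hVdef, this]
    have hP1 : ∀ s ∈ F', P Set.univ s = 1 := fun s hs => by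
      rw [hPdef]; simp only [Measure.restrict_univ]; exact hpint s hs
    rw [lintegral_congr_ae (aeτ.mono fun s hs => hP1 s hs)]
    simp
  -- reduce the goal integrals to μt, νt
  have hred : ∀ ρ : Measure S, IsFiniteMeasure ρ → ∀ B : Set S,
      ∫⁻ s, (∫⁻ t in B, w s t ∂lam) ∂ρ = ∫⁻ s, P B s ∂(ρ.withDensity h) := by
    intro ρ hρ B
    haveI := hρ
    have hWE0 : ∀ s, s ∉ F' → ∫⁻ t in B, w s t ∂lam = 0 := by
      intro s hs
      refine le_antisymm ?_ zero_le
      calc ∫⁻ t in B, w s t ∂lam ≤ ∫⁻ t, w s t ∂lam := setLIntegral_le_lintegral _ _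
        _ = h s := (hh s).symm
        _ = 0 := hzero s hs
    have hWEm : Measurable fun s => ∫⁻ t in B, w s t ∂lam := hw.lintegral_prod_right'
    calc ∫⁻ s, (∫⁻ t in B, w s t ∂lam) ∂ρ
        = ∫⁻ s in F', (∫⁻ t in B, w s t ∂lam) ∂ρ
          + ∫⁻ s in F'ᶜ, (∫⁻ t in B, w s t ∂lam) ∂ρ := (lintegral_add_compl _ hF').symm
      _ = ∫⁻ s in F', (∫⁻ t in B, w s t ∂lam) ∂ρ := by
          rw [setLIntegral_congr_fun hF'.compl (fun s hs => hWE0 s hs)]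
          simp
      _ = ∫⁻ s in F', h s * P B s ∂ρ := by
          refine setLIntegral_congr_fun hF' (fun s hs => ?_)
          have h0 : h s ≠ 0 := ne_of_gt hs
          rw [hPdef]
          simp only
          rw [lintegral_mul_const' _ _ (ENNReal.inv_ne_top.mpr h0)]
          rw [mul_comm (h s), mul_assoc, ENNReal.inv_mul_cancel h0 (hhfin s), mul_one]
      _ = ∫⁻ s, P B s ∂((ρ.restrict F').withDensity h) := by
          rw [lintegral_withDensity_eq_lintegral_mul _ hhm (hPm B)]
          rfl
      _ = ∫⁻ s, P B s ∂(ρ.withDensity h) := by rw [← hwd ρ]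
  -- decompose μt, νt
  have hc : ∀ B : Set S,
      ∫⁻ s, P B s ∂μt = ∫⁻ s, P B s ∂σ + ∫⁻ s, P B s ∂(νt.restrict A + μt.restrict Aᶜ) := by
    intro B
    conv_lhs => rw [← Measure.restrict_add_restrict_compl (μ := μt) hA, ← hσadd]
    rw [add_assoc, lintegral_add_measure]
  have hc' : ∀ B : Set S,
      ∫⁻ s, P B s ∂νt = ∫⁻ s, P B s ∂τ + ∫⁻ s, P B s ∂(νt.restrict A + μt.restrict Aᶜ) := by
    intro B
    conv_lhs => rw [← Measure.restrict_add_restrict_compl (μ := νt) hA, ← hτadd]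
    rw [lintegral_add_measure, lintegral_add_measure, lintegral_add_measure]
    ring
  set K : ℝ≥0∞ := ENNReal.ofReal (κ ^ 2) with hKdef
  have hKtop : K ≠ ∞ := ENNReal.ofReal_ne_top
  -- cross-ratio for p
  have hcrp : ∀ s s', s ∈ F' → s' ∈ F' → ∀ t t',
      p s t * p s' t' ≤ K * (p s' t * p s t') := by
    intro s s' hs hs' t t'
    have hw' := hcr s s' t t' hs hs'
    have e1 : p s t * p s' t' = (w s t * w s' t') * ((h s)⁻¹ * (h s')⁻¹) := by
      rw [hpdef]; ring
    have e2 : K * (p s' t * p s t') = (K * (w s' t * w s t')) * ((h s)⁻¹ * (h s')⁻¹) := by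
      rw [hpdef]; ring
    rw [e1, e2]
    exact mul_le_mul_left hw' _
  -- cross-ratio for P on two complementary sets
  have hcrP : ∀ B : Set S, ∀ s s', s ∈ F' → s' ∈ F' →
      P B s * P Bᶜ s' ≤ K * (P B s' * P Bᶜ s) := by
    intro B s s' hs hs'
    have step1 : ∀ t', P B s * p s' t' ≤ K * (P B s' * p s t') := by
      intro t'
      have : ∫⁻ t in B, p s t * p s' t' ∂lam ≤ ∫⁻ t in B, K * (p s' t * p s t') ∂lam :=
        lintegral_mono fun t => hcrp s s' hs hs' t t'
      rwa [lintegral_mul_const' _ _ (hpfin s' hs' t'),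
        lintegral_const_mul' _ _ hKtop,
        lintegral_mul_const' _ _ (hpfin s hs t')] at this
    have : ∫⁻ t' in Bᶜ, P B s * p s' t' ∂lam ≤ ∫⁻ t' in Bᶜ, K * (P B s' * p s t') ∂lam :=
      lintegral_mono fun t' => step1 t'
    rwa [lintegral_const_mul' _ _ (hPfin s hs B),
      lintegral_const_mul' _ _ hKtop,
      lintegral_const_mul' _ _ (hPfin s' hs' B)] at this
  -- the set where U exceeds V
  set B : Set S := {t | V t < U t} with hBdef
  have hB : MeasurableSet B := measurableSet_lt hVm hUm
  set IBU := ∫⁻ t in B, U t ∂lam with hIBU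
  set ICU := ∫⁻ t in Bᶜ, U t ∂lam with hICU
  set IBV := ∫⁻ t in B, V t ∂lam with hIBV
  set ICV := ∫⁻ t in Bᶜ, V t ∂lam with hICV
  have hIBUσ : IBU = ∫⁻ s, P B s ∂σ := hswap σ inferInstance B
  have hICUσ : ICU = ∫⁻ s, P Bᶜ s ∂σ := hswap σ inferInstance Bᶜ
  have hIBVτ : IBV = ∫⁻ s, P B s ∂τ := hswap τ inferInstance B
  have hICVτ : ICV = ∫⁻ s, P Bᶜ s ∂τ := hswap τ inferInstance Bᶜ
  have hUadd : IBU + ICU = σ Set.univ := by rw [hIBU, hICU, lintegral_add_compl _ hB, hU1]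
  have hVadd : IBV + ICV = τ Set.univ := by rw [hIBV, hICV, lintegral_add_compl _ hB, hV1]
  have hσuniv : σ Set.univ ≤ 1 := by
    calc σ Set.univ ≤ μt.restrict A Set.univ := Measure.le_iff'.mp Measure.sub_le _
      _ ≤ μt Set.univ := Measure.le_iff'.mp Measure.restrict_le_self _
      _ = 1 := hμtmass
  have hτuniv : τ Set.univ ≤ 1 := by
    calc τ Set.univ ≤ νt.restrict Aᶜ Set.univ := Measure.le_iff'.mp Measure.sub_le _
      _ ≤ νt Set.univ := Measure.le_iff'.mp Measure.restrict_le_self _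
      _ = 1 := hνtmass
  have hIBUfin : IBU ≠ ∞ :=
    ((le_self_add.trans (hUadd.le.trans hσuniv)).trans_lt ENNReal.one_lt_top).ne
  have hICUfin : ICU ≠ ∞ :=
    ((le_add_self.trans (hUadd.le.trans hσuniv)).trans_lt ENNReal.one_lt_top).ne
  have hIBVfin : IBV ≠ ∞ :=
    ((le_self_add.trans (hVadd.le.trans hτuniv)).trans_lt ENNReal.one_lt_top).ne
  have hICVfin : ICV ≠ ∞ :=
    ((le_add_self.trans (hVadd.le.trans hτuniv)).trans_lt ENNReal.one_lt_top).ne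
  -- the star inequality
  have hstar : IBU * ICV ≤ K * (IBV * ICU) := by
    have step : ∀ᵐ s ∂σ, P B s * ICV ≤ (K * IBV) * P Bᶜ s := by
      refine aeσ.mono fun s hs => ?_
      have e1 : P B s * ICV = ∫⁻ s', P B s * P Bᶜ s' ∂τ := by
        rw [hICVτ, lintegral_const_mul' _ _ (hPfin s hs B)]
      have e2 : ∫⁻ s', P B s * P Bᶜ s' ∂τ ≤ ∫⁻ s', K * (P B s' * P Bᶜ s) ∂τ := by
        refine lintegral_mono_ae (aeτ.mono fun s' hs' => ?_)
        exact hcrP B s s' hs hs'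
      have e3 : ∫⁻ s', K * (P B s' * P Bᶜ s) ∂τ = (K * IBV) * P Bᶜ s := by
        rw [lintegral_const_mul' _ _ hKtop, lintegral_mul_const' _ _ (hPfin s hs Bᶜ), hIBVτ]
        ring
      rw [e1]; exact e2.trans e3.le
    have lhs_eq : IBU * ICV = ∫⁻ s, P B s * ICV ∂σ := by
      rw [lintegral_mul_const' _ _ hICVfin, hIBUσ]
    have rhs_eq : ∫⁻ s, (K * IBV) * P Bᶜ s ∂σ = (K * IBV) * ICU := by
      rw [lintegral_const_mul' _ _ (ENNReal.mul_ne_top hKtop hIBVfin), hICUσ]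
    calc IBU * ICV = ∫⁻ s, P B s * ICV ∂σ := lhs_eq
      _ ≤ ∫⁻ s, (K * IBV) * P Bᶜ s ∂σ := lintegral_mono_ae step
      _ = (K * IBV) * ICU := rhs_eq
      _ = K * (IBV * ICU) := by ring
  -- convert to real numbers
  have hresA : σ Set.univ + νt A = μt A := by
    have := congrArg (fun m : Measure S => m Set.univ) hσadd
    simpa [Measure.restrict_apply_univ] using this
  have hresA' : τ Set.univ + μt Aᶜ = νt Aᶜ := by
    have := congrArg (fun m : Measure S => m Set.univ) hτadd
    simpa [Measure.restrict_apply_univ] using this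
  have haa' : (σ Set.univ).toReal = (τ Set.univ).toReal := by
    have h1 : (σ Set.univ).toReal + (νt A).toReal = (μt A).toReal := by
      rw [← ENNReal.toReal_add (hσuniv.trans_lt ENNReal.one_lt_top).ne (measure_ne_top _ _)]
      rw [hresA]
    have h2 : (τ Set.univ).toReal + (μt Aᶜ).toReal = (νt Aᶜ).toReal := by
      rw [← ENNReal.toReal_add (hτuniv.trans_lt ENNReal.one_lt_top).ne (measure_ne_top _ _)]
      rw [hresA']
    have h3 : (μt A).toReal + (μt Aᶜ).toReal = 1 := by
      rw [← ENNReal.toReal_add (measure_ne_top _ _) (measure_ne_top _ _),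
        measure_add_measure_compl hA, hμtmass, ENNReal.toReal_one]
    have h4 : (νt A).toReal + (νt Aᶜ).toReal = 1 := by
      rw [← ENNReal.toReal_add (measure_ne_top _ _) (measure_ne_top _ _),
        measure_add_measure_compl hA, hνtmass, ENNReal.toReal_one]
    linarith
  have hpq : IBU.toReal + ICU.toReal = (σ Set.univ).toReal := by
    rw [← ENNReal.toReal_add hIBUfin hICUfin, hUadd]
  have hrs : IBV.toReal + ICV.toReal = (σ Set.univ).toReal := by
    rw [← ENNReal.toReal_add hIBVfin hICVfin, hVadd, haa']
  have hstar_r : IBU.toReal * ICV.toReal ≤ κ ^ 2 * (IBV.toReal * ICU.toReal) := by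
    have := ENNReal.toReal_mono (ENNReal.mul_ne_top hKtop
      (ENNReal.mul_ne_top hIBVfin hICUfin)) hstar
    rwa [ENNReal.toReal_mul, ENNReal.toReal_mul, ENNReal.toReal_mul, hKdef,
      ENNReal.toReal_ofReal (sq_nonneg κ)] at this
  have hkey := key_real hκ ENNReal.toReal_nonneg ENNReal.toReal_nonneg
    ENNReal.toReal_nonneg ENNReal.toReal_nonneg hpq hrs hstar_r
  have hβ : (0:ℝ) ≤ (κ - 1) / (κ + 1) := by
    apply div_nonneg <;> linarith
  have hfinal : IBU - IBV ≤ ENNReal.ofReal ((κ - 1) / (κ + 1)) * Dsup μt νt := by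
    have h5 : IBU ≤ ENNReal.ofReal ((κ - 1) / (κ + 1) * (σ Set.univ).toReal) + IBV := by
      conv_lhs => rw [← ENNReal.ofReal_toReal hIBUfin]
      rw [← ENNReal.ofReal_toReal hIBVfin, ← ENNReal.ofReal_add
        (mul_nonneg hβ ENNReal.toReal_nonneg) ENNReal.toReal_nonneg]
      exact ENNReal.ofReal_le_ofReal (by linarith)
    have h6 : IBU - IBV ≤ ENNReal.ofReal ((κ - 1) / (κ + 1) * (σ Set.univ).toReal) :=
      tsub_le_iff_right.mpr h5
    have h7 : ENNReal.ofReal ((κ - 1) / (κ + 1) * (σ Set.univ).toReal)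
        = ENNReal.ofReal ((κ - 1) / (κ + 1)) * σ Set.univ := by
      rw [ENNReal.ofReal_mul hβ, ENNReal.ofReal_toReal
        (hσuniv.trans_lt ENNReal.one_lt_top).ne]
    have h8 : σ Set.univ ≤ Dsup μt νt := by
      have : σ Set.univ = μt A - νt A :=
        ENNReal.eq_sub_of_add_eq (measure_ne_top _ _) hresA
      rw [this]; exact le_Dsup hA
    calc IBU - IBV ≤ ENNReal.ofReal ((κ - 1) / (κ + 1)) * σ Set.univ := h6.trans_eq h7
      _ ≤ _ := mul_le_mul_right h8 _
  -- final chain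
  have hsubsub : ∀ x y z : ℝ≥0∞, (x + z) - (y + z) ≤ x - y := by
    intro x y z
    rw [tsub_le_iff_right]
    calc x + z ≤ (x - y + y) + z := by gcongr; exact le_tsub_add
      _ = x - y + (y + z) := by ring
  calc (∫⁻ s, ∫⁻ t in E, w s t ∂lam ∂μ) - (∫⁻ s, ∫⁻ t in E, w s t ∂lam ∂ν)
      = (∫⁻ s, P E s ∂σ + ∫⁻ s, P E s ∂(νt.restrict A + μt.restrict Aᶜ))
        - (∫⁻ s, P E s ∂τ + ∫⁻ s, P E s ∂(νt.restrict A + μt.restrict Aᶜ)) := by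
        rw [hred μ inferInstance E, hred ν inferInstance E, ← hμt, ← hνt, hc E, hc' E]
    _ ≤ (∫⁻ s, P E s ∂σ) - (∫⁻ s, P E s ∂τ) := hsubsub _ _ _
    _ = (∫⁻ t in E, U t ∂lam) - (∫⁻ t in E, V t ∂lam) := by
        rw [hswap σ inferInstance E, hswap τ inferInstance E]
    _ ≤ ∫⁻ t in E, (U t - V t) ∂lam := lintegral_sub_le' _ _ hVm.aemeasurable
    _ ≤ ∫⁻ t, (U t - V t) ∂lam := setLIntegral_le_lintegral _ _
    _ = IBU - IBV := by
        rw [← lintegral_add_compl (fun t => U t - V t) hB]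
        have hz : ∫⁻ t in Bᶜ, (U t - V t) ∂lam = 0 := by
          rw [setLIntegral_congr_fun hB.compl (fun t ht =>
            tsub_eq_zero_of_le (not_lt.mp ht))]
          simp
        rw [hz, add_zero]
        rw [lintegral_sub hVm hIBVfin
          ((ae_restrict_iff' hB).mpr (ae_of_all _ fun t ht => (le_of_lt ht)))]
    _ ≤ ENNReal.ofReal ((κ - 1) / (κ + 1)) * Dsup μt νt := hfinal
lemma compKer_cons {S : Type*} [MeasurableSpace S] (lam : Measure S)
    (kk : S → S → ℝ≥0) (ks : List (S → S → ℝ≥0)) (s : S) (E : Set S) :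
    compKer lam (kk :: ks) s E = ∫⁻ t, (kk s t : ℝ≥0∞) * compKer lam ks t E ∂lam := rfl

lemma compKer_nil {S : Type*} [MeasurableSpace S] (lam : Measure S) (s : S) (E : Set S) :
    compKer lam [] s E = E.indicator (fun _ => (1 : ℝ≥0∞)) s := rfl

lemma compKer_mono {S : Type*} [MeasurableSpace S] (lam : Measure S)
    (ks : List (S → S → ℝ≥0)) {E E' : Set S} (hEE' : E ⊆ E') (s : S) :
    compKer lam ks s E ≤ compKer lam ks s E' := by
  induction ks generalizing s with
  | nil =>
    rw [compKer_nil, compKer_nil]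
    exact Set.indicator_le_indicator_of_subset hEE' (fun _ => zero_le) s
  | cons kk ks ih =>
    rw [compKer_cons, compKer_cons]
    exact lintegral_mono fun t => mul_le_mul_right (ih t) _

lemma compKer_bound {S : Type*} [MeasurableSpace S] (lam : Measure S)
    (ks : List (S → S → ℝ≥0))
    (hb : ∀ kk ∈ ks, ∃ C : ℝ≥0∞, C ≠ ⊤ ∧ ∀ s, ∫⁻ t, (kk s t : ℝ≥0∞) ∂lam ≤ C) :
    ∃ D : ℝ≥0∞, D ≠ ⊤ ∧ ∀ s E, compKer lam ks s E ≤ D := by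
  induction ks with
  | nil =>
    refine ⟨1, ENNReal.one_ne_top, fun s E => ?_⟩
    rw [compKer_nil]
    by_cases hs : s ∈ E <;> simp [Set.indicator, hs]
  | cons kk ks ih =>
    obtain ⟨C, hC, hCle⟩ := hb kk (List.mem_cons_self)
    obtain ⟨D, hD, hDle⟩ := ih (fun kk' h => hb kk' (List.mem_cons_of_mem _ h))
    refine ⟨C * D, ENNReal.mul_ne_top hC hD, fun s E => ?_⟩
    rw [compKer_cons]
    calc ∫⁻ t, (kk s t : ℝ≥0∞) * compKer lam ks t E ∂lam
        ≤ ∫⁻ t, (kk s t : ℝ≥0∞) * D ∂lam :=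
          lintegral_mono fun t => mul_le_mul_right (hDle t E) _
      _ = (∫⁻ t, (kk s t : ℝ≥0∞) ∂lam) * D := lintegral_mul_const' _ _ hD
      _ ≤ C * D := mul_le_mul_left (hCle s) _

lemma compKer_meas {S : Type*} [MeasurableSpace S] (lam : Measure S) [SigmaFinite lam]
    (ks : List (S → S → ℝ≥0))
    (hm : ∀ kk ∈ ks, Measurable fun z : S × S => (kk z.1 z.2 : ℝ≥0∞))
    {E : Set S} (hE : MeasurableSet E) :
    Measurable fun s => compKer lam ks s E := by
  induction ks with
  | nil =>
    simp only [compKer_nil]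
    exact measurable_const.indicator hE
  | cons kk ks ih =>
    simp only [compKer_cons]
    have h1 : Measurable fun z : S × S => (kk z.1 z.2 : ℝ≥0∞) * compKer lam ks z.2 E :=
      (hm kk (List.mem_cons_self)).mul
        ((ih (fun kk' h => hm kk' (List.mem_cons_of_mem _ h))).comp measurable_snd)
    exact h1.lintegral_prod_right'

def HYP {S : Type*} [MeasurableSpace S] (lam : Measure S)
    (q : (S → S → ℝ≥0) × Set S × Set S × ℝ) : Prop :=
  (Measurable fun z : S × S => (q.1 z.1 z.2 : ℝ≥0∞)) ∧
  (∃ C : ℝ≥0∞, C ≠ ⊤ ∧ ∀ s, ∫⁻ t, (q.1 s t : ℝ≥0∞) ∂lam ≤ C) ∧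
  (∀ s t, s ∉ q.2.1 ∨ t ∉ q.2.2.1 → q.1 s t = 0) ∧
  (1 ≤ q.2.2.2) ∧
  (∀ s ∈ q.2.1, ∀ s' ∈ q.2.1, ∀ t ∈ q.2.2.1, ∀ t' ∈ q.2.2.1,
    (q.1 s t : ℝ) * (q.1 s' t' : ℝ) ≤ q.2.2.2 ^ 2 * ((q.1 s' t : ℝ) * (q.1 s t' : ℝ)))

lemma claim {S : Type*} [MeasurableSpace S] (lam : Measure S) [SigmaFinite lam]
    (qs : List ((S → S → ℝ≥0) × Set S × Set S × ℝ)) (hq : ∀ q ∈ qs, HYP lam q) :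
    ∀ (μ ν : Measure S), IsFiniteMeasure μ → IsFiniteMeasure ν →
    (∫⁻ s, compKer lam (qs.map Prod.fst) s Set.univ ∂μ) = 1 →
    (∫⁻ s, compKer lam (qs.map Prod.fst) s Set.univ ∂ν) = 1 →
    ∀ E : Set S, MeasurableSet E →
    (∫⁻ s, compKer lam (qs.map Prod.fst) s E ∂μ)
      - (∫⁻ s, compKer lam (qs.map Prod.fst) s E ∂ν) ≤
    ENNReal.ofReal ((qs.map (fun q => (q.2.2.2 - 1) / (q.2.2.2 + 1))).prod) *
      Dsup (μ.withDensity (fun s => compKer lam (qs.map Prod.fst) s Set.univ))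
        (ν.withDensity (fun s => compKer lam (qs.map Prod.fst) s Set.univ)) := by
  induction qs with
  | nil =>
    intro μ ν hμf hνf hμ1 hν1 E hE
    simp only [List.map_nil, List.prod_nil, ENNReal.ofReal_one, one_mul]
    have h1 : ∀ (ρ : Measure S) (B : Set S), MeasurableSet B →
        ∫⁻ s, compKer lam ([] : List (S → S → ℝ≥0)) s B ∂ρ = ρ B := by
      intro ρ B hB
      simp only [compKer_nil]
      exact lintegral_indicator_one hB
    rw [h1 μ E hE, h1 ν E hE]
    have h2 : (fun s => compKer lam ([] : List (S → S → ℝ≥0)) s Set.univ)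
        = fun _ => (1 : ℝ≥0∞) := by
      funext s; rw [compKer_nil, Set.indicator_univ]
    rw [h2]
    have h3 : ∀ ρ : Measure S, ρ.withDensity (fun _ => (1:ℝ≥0∞)) = ρ := by
      intro ρ
      have : (fun _ : S => (1:ℝ≥0∞)) = (1 : S → ℝ≥0∞) := rfl
      rw [this, withDensity_one]
    rw [h3, h3]
    exact le_Dsup hE
  | cons q Q ih =>
    intro μ ν hμf hνf hμ1 hν1 E hE
    haveI := hμf; haveI := hνf
    obtain ⟨hm0, ⟨C0, hC0, hC0le⟩, hsupp0, hκ0, hcr0⟩ := hq q (List.mem_cons_self)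
    have hqQ : ∀ q' ∈ Q, HYP lam q' := fun q' h => hq q' (List.mem_cons_of_mem _ h)
    set k0 : S → S → ℝ≥0 := q.1 with hk0
    set kQ : List (S → S → ℝ≥0) := Q.map Prod.fst with hkQ
    have hmQ : ∀ kk ∈ kQ, Measurable fun z : S × S => (kk z.1 z.2 : ℝ≥0∞) := by
      intro kk hkk
      obtain ⟨q', hq', rfl⟩ := List.mem_map.mp hkk
      exact (hqQ q' hq').1
    have hbQ : ∀ kk ∈ kQ, ∃ C : ℝ≥0∞, C ≠ ⊤ ∧ ∀ s, ∫⁻ t, (kk s t : ℝ≥0∞) ∂lam ≤ C := by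
      intro kk hkk
      obtain ⟨q', hq', rfl⟩ := List.mem_map.mp hkk
      exact (hqQ q' hq').2.1
    obtain ⟨DQ, hDQ, hDQle⟩ := compKer_bound lam kQ hbQ
    set hQf : S → ℝ≥0∞ := fun t => compKer lam kQ t Set.univ with hQfdef
    have hQm : Measurable hQf := compKer_meas lam kQ hmQ MeasurableSet.univ
    have hQfin : ∀ t, hQf t ≠ ⊤ := fun t => ((hDQle t _).trans_lt hDQ.lt_top).ne
    set w : S → S → ℝ≥0∞ := fun s t => (k0 s t : ℝ≥0∞) * hQf t with hwdef
    have hwm : Measurable fun z : S × S => w z.1 z.2 := hm0.mul (hQm.comp measurable_snd)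
    have hwfin : ∀ s t, w s t ≠ ⊤ := fun s t =>
      ENNReal.mul_ne_top ENNReal.coe_ne_top (hQfin t)
    set hful : S → ℝ≥0∞ := fun s => compKer lam (k0 :: kQ) s Set.univ with hfuldef
    have hmapc : (q :: Q).map Prod.fst = k0 :: kQ := rfl
    have hh : ∀ s, hful s = ∫⁻ t, w s t ∂lam := fun s => rfl
    have hbF : ∀ kk ∈ k0 :: kQ, ∃ C : ℝ≥0∞, C ≠ ⊤ ∧ ∀ s, ∫⁻ t, (kk s t : ℝ≥0∞) ∂lam ≤ C := by
      intro kk hkk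
      rcases List.mem_cons.mp hkk with h | h
      · subst h; exact ⟨C0, hC0, hC0le⟩
      · exact hbQ kk h
    obtain ⟨DF, hDF, hDFle⟩ := compKer_bound lam (k0 :: kQ) hbF
    have hfulfin : ∀ s, hful s ≠ ⊤ := fun s => ((hDFle s _).trans_lt hDF.lt_top).ne
    have hF0 : ∀ s, s ∉ q.2.1 → hful s = 0 := by
      intro s hs
      rw [hh s]
      have hz : ∀ t, w s t = 0 := by
        intro t
        rw [hwdef]
        simp only
        rw [hsupp0 s t (Or.inl hs)]
        simp
      simp only [hz, lintegral_zero]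
    have hcrw : ∀ s s' t t', 0 < hful s → 0 < hful s' →
        w s t * w s' t' ≤ ENNReal.ofReal (q.2.2.2 ^ 2) * (w s' t * w s t') := by
      intro s s' t t' hs hs'
      have hsF : s ∈ q.2.1 := by
        by_contra hc; rw [hF0 s hc] at hs; exact lt_irrefl _ hs
      have hs'F : s' ∈ q.2.1 := by
        by_contra hc; rw [hF0 s' hc] at hs'; exact lt_irrefl _ hs'
      by_cases ht : t ∈ q.2.2.1
      · by_cases ht' : t' ∈ q.2.2.1
        · have hr := hcr0 s hsF s' hs'F t ht t' ht'
          have coemul : ∀ a b : ℝ≥0, (a : ℝ≥0∞) * b = ENNReal.ofReal ((a : ℝ) * b) := by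
            intro a b
            rw [ENNReal.ofReal_mul a.coe_nonneg]
            simp [ENNReal.ofReal_coe_nnreal]
          have hkey : (k0 s t : ℝ≥0∞) * (k0 s' t' : ℝ≥0∞) ≤
              ENNReal.ofReal (q.2.2.2 ^ 2) * ((k0 s' t : ℝ≥0∞) * (k0 s t' : ℝ≥0∞)) := by
            rw [coemul, coemul, ← ENNReal.ofReal_mul (by positivity)]
            exact ENNReal.ofReal_le_ofReal hr
          calc w s t * w s' t'
              = ((k0 s t : ℝ≥0∞) * (k0 s' t' : ℝ≥0∞)) * (hQf t * hQf t') := by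
                rw [hwdef]; ring
            _ ≤ (ENNReal.ofReal (q.2.2.2 ^ 2) * ((k0 s' t : ℝ≥0∞) * (k0 s t' : ℝ≥0∞)))
                  * (hQf t * hQf t') := mul_le_mul_left hkey _
            _ = ENNReal.ofReal (q.2.2.2 ^ 2) * (w s' t * w s t') := by
                rw [hwdef]; ring
        · have h1 : k0 s' t' = 0 := hsupp0 s' t' (Or.inr ht')
          have h2 : w s' t' = 0 := by rw [hwdef]; simp only; rw [h1]; simp
          rw [h2]; simp
      · have h1 : k0 s t = 0 := hsupp0 s t (Or.inr ht)
        have h2 : w s t = 0 := by rw [hwdef]; simp only; rw [h1]; simp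
        rw [h2]; simp
    -- pushforward density measures
    have hρm : ∀ ρ : Measure S, IsFiniteMeasure ρ →
        Measurable fun t => ∫⁻ s, (k0 s t : ℝ≥0∞) ∂ρ := by
      intro ρ hρ
      haveI := hρ
      exact (hm0.comp measurable_swap).lintegral_prod_right'
    have hE1 : ∀ ρ : Measure S, IsFiniteMeasure ρ → ∀ B : Set S, MeasurableSet B →
        ∫⁻ s, compKer lam (k0 :: kQ) s B ∂ρ =
          ∫⁻ t, compKer lam kQ t B
            ∂(lam.withDensity (fun t => ∫⁻ s, (k0 s t : ℝ≥0∞) ∂ρ)) := by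
      intro ρ hρ B hB
      haveI := hρ
      have hCKm := compKer_meas lam kQ hmQ hB
      have hjm : Measurable fun z : S × S =>
          (k0 z.1 z.2 : ℝ≥0∞) * compKer lam kQ z.2 B :=
        hm0.mul (hCKm.comp measurable_snd)
      have hCKfin : ∀ t, compKer lam kQ t B ≠ ⊤ := fun t =>
        ((hDQle t _).trans_lt hDQ.lt_top).ne
      calc ∫⁻ s, compKer lam (k0 :: kQ) s B ∂ρ
          = ∫⁻ s, ∫⁻ t, (k0 s t : ℝ≥0∞) * compKer lam kQ t B ∂lam ∂ρ := rfl
        _ = ∫⁻ t, ∫⁻ s, (k0 s t : ℝ≥0∞) * compKer lam kQ t B ∂ρ ∂lam :=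
            lintegral_lintegral_swap hjm.aemeasurable
        _ = ∫⁻ t, (∫⁻ s, (k0 s t : ℝ≥0∞) ∂ρ) * compKer lam kQ t B ∂lam := by
            refine lintegral_congr fun t => ?_
            exact lintegral_mul_const' _ _ (hCKfin t)
        _ = ∫⁻ t, compKer lam kQ t B
              ∂(lam.withDensity (fun t => ∫⁻ s, (k0 s t : ℝ≥0∞) ∂ρ)) :=
            (lintegral_withDensity_eq_lintegral_mul lam (hρm ρ hρ) hCKm).symm
    have hξf : ∀ ρ : Measure S, IsFiniteMeasure ρ →
        IsFiniteMeasure (lam.withDensity (fun t => ∫⁻ s, (k0 s t : ℝ≥0∞) ∂ρ)) := by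
      intro ρ hρ
      haveI := hρ
      constructor
      rw [withDensity_apply _ MeasurableSet.univ, Measure.restrict_univ]
      have hsw : ∫⁻ t, (∫⁻ s, (k0 s t : ℝ≥0∞) ∂ρ) ∂lam
          = ∫⁻ s, (∫⁻ t, (k0 s t : ℝ≥0∞) ∂lam) ∂ρ :=
        lintegral_lintegral_swap ((hm0.comp measurable_swap).aemeasurable)
      rw [hsw]
      calc ∫⁻ s, (∫⁻ t, (k0 s t : ℝ≥0∞) ∂lam) ∂ρ ≤ ∫⁻ _, C0 ∂ρ :=
            lintegral_mono fun s => hC0le s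
        _ = C0 * ρ Set.univ := by rw [lintegral_const]
        _ < ⊤ := ENNReal.mul_lt_top hC0.lt_top (measure_lt_top _ _)
    haveI hξμf := hξf μ hμf
    haveI hξνf := hξf ν hνf
    have hξμ1 : ∫⁻ t, compKer lam kQ t Set.univ
        ∂(lam.withDensity (fun t => ∫⁻ s, (k0 s t : ℝ≥0∞) ∂μ)) = 1 := by
      rw [← hE1 μ hμf Set.univ MeasurableSet.univ]; exact hμ1
    have hξν1 : ∫⁻ t, compKer lam kQ t Set.univ
        ∂(lam.withDensity (fun t => ∫⁻ s, (k0 s t : ℝ≥0∞) ∂ν)) = 1 := by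
      rw [← hE1 ν hνf Set.univ MeasurableSet.univ]; exact hν1
    have ihres := ih hqQ
      (lam.withDensity (fun t => ∫⁻ s, (k0 s t : ℝ≥0∞) ∂μ))
      (lam.withDensity (fun t => ∫⁻ s, (k0 s t : ℝ≥0∞) ∂ν))
      hξμf hξνf hξμ1 hξν1 E hE
    have hβ0 : (0:ℝ) ≤ (q.2.2.2 - 1) / (q.2.2.2 + 1) := by
      apply div_nonneg <;> linarith
    have hE3 : ∀ ρ : Measure S, IsFiniteMeasure ρ → ∀ B : Set S, MeasurableSet B →
        ((lam.withDensity (fun t => ∫⁻ s, (k0 s t : ℝ≥0∞) ∂ρ)).withDensity hQf) B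
          = ∫⁻ s, ∫⁻ t in B, w s t ∂lam ∂ρ := by
      intro ρ hρ B hB
      haveI := hρ
      rw [withDensity_apply _ hB, restrict_withDensity hB,
        lintegral_withDensity_eq_lintegral_mul _ (hρm ρ hρ) hQm]
      have hcong : ∫⁻ t in B, ((fun t => ∫⁻ s, (k0 s t : ℝ≥0∞) ∂ρ) * hQf) t ∂lam
          = ∫⁻ t in B, ∫⁻ s, w s t ∂ρ ∂lam := by
        refine lintegral_congr fun t => ?_
        simp only [Pi.mul_apply]
        rw [hwdef]
        simp only
        exact (lintegral_mul_const' _ _ (hQfin t)).symm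
      rw [hcong]
      exact lintegral_lintegral_swap
        (((hm0.comp measurable_swap).mul (hQm.comp measurable_fst)).aemeasurable)
    have hDstep : Dsup
        ((lam.withDensity (fun t => ∫⁻ s, (k0 s t : ℝ≥0∞) ∂μ)).withDensity hQf)
        ((lam.withDensity (fun t => ∫⁻ s, (k0 s t : ℝ≥0∞) ∂ν)).withDensity hQf) ≤
        ENNReal.ofReal ((q.2.2.2 - 1) / (q.2.2.2 + 1)) *
          Dsup (μ.withDensity hful) (ν.withDensity hful) := by
      refine Dsup_le fun B hB => ?_
      rw [hE3 μ hμf B hB, hE3 ν hνf B hB]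
      exact onestep lam w hwm hwfin hful hh hfulfin q.2.2.2 hκ0 hcrw μ ν hμ1 hν1 B hB
    calc (∫⁻ s, compKer lam ((q :: Q).map Prod.fst) s E ∂μ)
        - (∫⁻ s, compKer lam ((q :: Q).map Prod.fst) s E ∂ν)
        = (∫⁻ t, compKer lam kQ t E
            ∂(lam.withDensity (fun t => ∫⁻ s, (k0 s t : ℝ≥0∞) ∂μ)))
          - (∫⁻ t, compKer lam kQ t E
            ∂(lam.withDensity (fun t => ∫⁻ s, (k0 s t : ℝ≥0∞) ∂ν))) := by
          rw [hmapc, hE1 μ hμf E hE, hE1 ν hνf E hE]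
      _ ≤ ENNReal.ofReal ((Q.map (fun q => (q.2.2.2 - 1) / (q.2.2.2 + 1))).prod) *
            Dsup ((lam.withDensity (fun t => ∫⁻ s, (k0 s t : ℝ≥0∞) ∂μ)).withDensity
                (fun s => compKer lam kQ s Set.univ))
              ((lam.withDensity (fun t => ∫⁻ s, (k0 s t : ℝ≥0∞) ∂ν)).withDensity
                (fun s => compKer lam kQ s Set.univ)) := ihres
      _ ≤ ENNReal.ofReal ((Q.map (fun q => (q.2.2.2 - 1) / (q.2.2.2 + 1))).prod) *
            (ENNReal.ofReal ((q.2.2.2 - 1) / (q.2.2.2 + 1)) *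
              Dsup (μ.withDensity hful) (ν.withDensity hful)) :=
          mul_le_mul_right hDstep _
      _ = ENNReal.ofReal
            (((q :: Q).map (fun q => (q.2.2.2 - 1) / (q.2.2.2 + 1))).prod) *
            Dsup (μ.withDensity (fun s => compKer lam ((q :: Q).map Prod.fst) s Set.univ))
              (ν.withDensity (fun s => compKer lam ((q :: Q).map Prod.fst) s Set.univ)) := by
          rw [List.map_cons, List.prod_cons, ENNReal.ofReal_mul hβ0]
          rw [hmapc]
          ring

/-- For density kernels `k₁, …, k_n` with rectangular supports `F_m × G_m`
and cross-ratio bounds `κ_m²`, if `Kⁿ(s,S) > 0` on `F₁`, then for all finite nonnegative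
measures `x, y` with `x(F₁) > 0` and `y(F₁) > 0`,
`δ_TV(xKⁿ/‖xKⁿ‖, yKⁿ/‖yKⁿ‖) ≤ 2 ∏_m (κ_m−1)/(κ_m+1)`, where
`xKⁿ(E) = ∫ Kⁿ(s,E) x(ds)` and `δ_TV` is written out as
`sup_E(difference) + sup_E(opposite difference)` over measurable `E`. -/
theorem stmt_13 {S : Type*} [MetricSpace S] [CompleteSpace S]
    [TopologicalSpace.SeparableSpace S] [MeasurableSpace S] [BorelSpace S]
    (lam : Measure S) [SigmaFinite lam]
    (n : ℕ) (hn : 0 < n)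
    (k : Fin n → S → S → ℝ≥0)
    (hkm : ∀ m, Measurable fun p : S × S => k m p.1 p.2)
    (hkb : ∀ m, ∃ C : ℝ≥0∞, C < ⊤ ∧ ∀ s, ∫⁻ t, (k m s t : ℝ≥0∞) ∂lam ≤ C)
    (F G : Fin n → Set S)
    (hFm : ∀ m, MeasurableSet (F m)) (hGm : ∀ m, MeasurableSet (G m))
    (hFpos : ∀ m, 0 < lam (F m)) (hGpos : ∀ m, 0 < lam (G m))
    (hsupp : ∀ m, (∀ s ∈ F m, ∀ t ∈ G m, 0 < k m s t) ∧
      ∀ s t, (s, t) ∉ (F m) ×ˢ (G m) → k m s t = 0)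
    (κ : Fin n → ℝ) (hκ : ∀ m, 1 ≤ κ m)
    (hcross : ∀ m, ∀ s₁ ∈ F m, ∀ s₂ ∈ F m, ∀ t₁ ∈ G m, ∀ t₂ ∈ G m,
      (k m s₁ t₁ : ℝ) * (k m s₂ t₂ : ℝ) ≤ (κ m) ^ 2 * ((k m s₂ t₁ : ℝ) * (k m s₁ t₂ : ℝ)))
    (hKpos : ∀ s ∈ F ⟨0, hn⟩, 0 < compKer lam (List.ofFn k) s Set.univ)
    (x y : Measure S) (hxf : IsFiniteMeasure x) (hyf : IsFiniteMeasure y)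
    (hx : 0 < x (F ⟨0, hn⟩)) (hy : 0 < y (F ⟨0, hn⟩)) :
    sSup {d : ℝ | ∃ E : Set S, MeasurableSet E ∧
        d = ((∫⁻ s, compKer lam (List.ofFn k) s E ∂x) /
              (∫⁻ s, compKer lam (List.ofFn k) s Set.univ ∂x)).toReal -
            ((∫⁻ s, compKer lam (List.ofFn k) s E ∂y) /
              (∫⁻ s, compKer lam (List.ofFn k) s Set.univ ∂y)).toReal} +
      sSup {d : ℝ | ∃ E : Set S, MeasurableSet E ∧
        d = ((∫⁻ s, compKer lam (List.ofFn k) s E ∂y) /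
              (∫⁻ s, compKer lam (List.ofFn k) s Set.univ ∂y)).toReal -
            ((∫⁻ s, compKer lam (List.ofFn k) s E ∂x) /
              (∫⁻ s, compKer lam (List.ofFn k) s Set.univ ∂x)).toReal} ≤
      2 * ∏ m, (κ m - 1) / (κ m + 1) := by
  classical
  haveI := hxf; haveI := hyf
  set qs : List ((S → S → ℝ≥0) × Set S × Set S × ℝ) :=
    List.ofFn (fun m => (k m, F m, G m, κ m)) with hqs
  have hmap : qs.map Prod.fst = List.ofFn k := by
    rw [hqs, List.map_ofFn]; rfl
  have hqH : ∀ q ∈ qs, HYP lam q := by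
    intro q hqmem
    rw [hqs] at hqmem
    obtain ⟨m, rfl⟩ := List.mem_ofFn.mp hqmem
    refine ⟨measurable_coe_nnreal_ennreal.comp (hkm m), ?_, ?_, hκ m, ?_⟩
    · obtain ⟨C, hC, hCle⟩ := hkb m
      exact ⟨C, hC.ne, hCle⟩
    · intro s t hst
      exact (hsupp m).2 s t (by
        rw [Set.mem_prod]
        tauto)
    · intro s hs s' hs' t ht t' ht'
      exact hcross m s hs s' hs' t ht t' ht'
  have hb' : ∀ kk ∈ List.ofFn k, ∃ C : ℝ≥0∞, C ≠ ⊤ ∧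
      ∀ s, ∫⁻ t, (kk s t : ℝ≥0∞) ∂lam ≤ C := by
    intro kk hkk
    obtain ⟨m, rfl⟩ := List.mem_ofFn.mp hkk
    obtain ⟨C, hC, hCle⟩ := hkb m
    exact ⟨C, hC.ne, hCle⟩
  have hm' : ∀ kk ∈ List.ofFn k, Measurable fun z : S × S => (kk z.1 z.2 : ℝ≥0∞) := by
    intro kk hkk
    obtain ⟨m, rfl⟩ := List.mem_ofFn.mp hkk
    exact measurable_coe_nnreal_ennreal.comp (hkm m)
  obtain ⟨D, hD, hDle⟩ := compKer_bound lam (List.ofFn k) hb'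
  have hCKm : Measurable fun s => compKer lam (List.ofFn k) s Set.univ :=
    compKer_meas lam _ hm' MeasurableSet.univ
  set Zx := ∫⁻ s, compKer lam (List.ofFn k) s Set.univ ∂x with hZx
  set Zy := ∫⁻ s, compKer lam (List.ofFn k) s Set.univ ∂y with hZy
  have hZfin : ∀ (ρ : Measure S), IsFiniteMeasure ρ →
      (∫⁻ s, compKer lam (List.ofFn k) s Set.univ ∂ρ) ≠ ⊤ := by
    intro ρ hρ
    haveI := hρ
    refine ((lintegral_mono fun s => hDle s _).trans_lt ?_).ne
    rw [lintegral_const]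
    exact ENNReal.mul_lt_top hD.lt_top (measure_lt_top _ _)
  have hZxfin : Zx ≠ ⊤ := hZfin x hxf
  have hZyfin : Zy ≠ ⊤ := hZfin y hyf
  have hZpos : ∀ (ρ : Measure S), 0 < ρ (F ⟨0, hn⟩) →
      (∫⁻ s, compKer lam (List.ofFn k) s Set.univ ∂ρ) ≠ 0 := by
    intro ρ hρ h0
    have hae := (lintegral_eq_zero_iff hCKm).mp h0
    have hsub : F ⟨0, hn⟩ ⊆ {s | compKer lam (List.ofFn k) s Set.univ ≠ 0} :=
      fun s hs => (hKpos s hs).ne'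
    have : ρ {s | compKer lam (List.ofFn k) s Set.univ ≠ 0} = 0 := by
      have := ae_iff.mp hae
      simpa using this
    exact absurd (measure_mono_null hsub this) hρ.ne'
  have hZxpos : Zx ≠ 0 := hZpos x hx
  have hZypos : Zy ≠ 0 := hZpos y hy
  haveI hfinx : IsFiniteMeasure (Zx⁻¹ • x) := by
    constructor
    rw [Measure.smul_apply, smul_eq_mul]
    exact ENNReal.mul_lt_top (ENNReal.inv_lt_top.mpr (pos_iff_ne_zero.mpr hZxpos))
      (measure_lt_top _ _)
  haveI hfiny : IsFiniteMeasure (Zy⁻¹ • y) := by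
    constructor
    rw [Measure.smul_apply, smul_eq_mul]
    exact ENNReal.mul_lt_top (ENNReal.inv_lt_top.mpr (pos_iff_ne_zero.mpr hZypos))
      (measure_lt_top _ _)
  have hμ1 : ∫⁻ s, compKer lam (qs.map Prod.fst) s Set.univ ∂(Zx⁻¹ • x) = 1 := by
    rw [hmap, lintegral_smul_measure, ← hZx]
    exact ENNReal.inv_mul_cancel hZxpos hZxfin
  have hν1 : ∫⁻ s, compKer lam (qs.map Prod.fst) s Set.univ ∂(Zy⁻¹ • y) = 1 := by
    rw [hmap, lintegral_smul_measure, ← hZy]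
    exact ENNReal.inv_mul_cancel hZypos hZyfin
  set Breal : ℝ := ∏ m, (κ m - 1) / (κ m + 1) with hBreal
  have hBnonneg : 0 ≤ Breal := by
    refine Finset.prod_nonneg fun m _ => ?_
    have := hκ m
    apply div_nonneg <;> linarith
  have hprodeq : ((qs.map (fun q => (q.2.2.2 - 1) / (q.2.2.2 + 1))).prod) = Breal := by
    rw [hqs, List.map_ofFn]
    rw [List.prod_ofFn]
    rfl
  -- Dsup of the normalized inputs is at most 1
  have hDsup1 : ∀ (ρ ρ' : Measure S) (hρ : IsFiniteMeasure ρ),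
      (∫⁻ s, compKer lam (List.ofFn k) s Set.univ ∂ρ = 1) →
      Dsup (ρ.withDensity (fun s => compKer lam (List.ofFn k) s Set.univ))
        (ρ'.withDensity (fun s => compKer lam (List.ofFn k) s Set.univ)) ≤ 1 := by
    intro ρ ρ' hρ hρ1
    refine Dsup_le fun B hB => ?_
    refine le_trans tsub_le_self ?_
    rw [withDensity_apply _ hB]
    exact (setLIntegral_le_lintegral _ _).trans hρ1.le
  -- the main per-set bound
  have hkey : ∀ (ρ ρ' : Measure S) (hρf : IsFiniteMeasure ρ) (hρ'f : IsFiniteMeasure ρ')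
      (hρ0 : (∫⁻ s, compKer lam (List.ofFn k) s Set.univ ∂ρ) ≠ 0)
      (hρfin : (∫⁻ s, compKer lam (List.ofFn k) s Set.univ ∂ρ) ≠ ⊤)
      (hρ'0 : (∫⁻ s, compKer lam (List.ofFn k) s Set.univ ∂ρ') ≠ 0)
      (hρ'fin : (∫⁻ s, compKer lam (List.ofFn k) s Set.univ ∂ρ') ≠ ⊤)
      (hμ1' : ∫⁻ s, compKer lam (qs.map Prod.fst) s Set.univ
          ∂((∫⁻ s, compKer lam (List.ofFn k) s Set.univ ∂ρ)⁻¹ • ρ) = 1)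
      (hν1' : ∫⁻ s, compKer lam (qs.map Prod.fst) s Set.univ
          ∂((∫⁻ s, compKer lam (List.ofFn k) s Set.univ ∂ρ')⁻¹ • ρ') = 1)
      (E : Set S) (hE : MeasurableSet E),
      ((∫⁻ s, compKer lam (List.ofFn k) s E ∂ρ) /
          (∫⁻ s, compKer lam (List.ofFn k) s Set.univ ∂ρ)).toReal -
        ((∫⁻ s, compKer lam (List.ofFn k) s E ∂ρ') /
          (∫⁻ s, compKer lam (List.ofFn k) s Set.univ ∂ρ')).toReal ≤ Breal := by
    intro ρ ρ' hρf hρ'f hρ0 hρfin hρ'0 hρ'fin hμ1' hν1' E hE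
    haveI := hρf; haveI := hρ'f
    haveI hsρ : IsFiniteMeasure ((∫⁻ s, compKer lam (List.ofFn k) s Set.univ ∂ρ)⁻¹ • ρ) := by
      constructor
      rw [Measure.smul_apply, smul_eq_mul]
      exact ENNReal.mul_lt_top (ENNReal.inv_lt_top.mpr (pos_iff_ne_zero.mpr hρ0))
        (measure_lt_top _ _)
    haveI hsρ' : IsFiniteMeasure ((∫⁻ s, compKer lam (List.ofFn k) s Set.univ ∂ρ')⁻¹ • ρ') := by
      constructor
      rw [Measure.smul_apply, smul_eq_mul]
      exact ENNReal.mul_lt_top (ENNReal.inv_lt_top.mpr (pos_iff_ne_zero.mpr hρ'0))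
        (measure_lt_top _ _)
    have hclaim := claim lam qs hqH
      ((∫⁻ s, compKer lam (List.ofFn k) s Set.univ ∂ρ)⁻¹ • ρ)
      ((∫⁻ s, compKer lam (List.ofFn k) s Set.univ ∂ρ')⁻¹ • ρ')
      hsρ hsρ' hμ1' hν1' E hE
    rw [hmap] at hclaim
    rw [lintegral_smul_measure, lintegral_smul_measure] at hclaim
    have hbound := hclaim.trans (by
      calc ENNReal.ofReal ((qs.map (fun q => (q.2.2.2 - 1) / (q.2.2.2 + 1))).prod) *
            Dsup (((∫⁻ s, compKer lam (List.ofFn k) s Set.univ ∂ρ)⁻¹ • ρ).withDensity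
                (fun s => compKer lam (List.ofFn k) s Set.univ))
              (((∫⁻ s, compKer lam (List.ofFn k) s Set.univ ∂ρ')⁻¹ • ρ').withDensity
                (fun s => compKer lam (List.ofFn k) s Set.univ))
          ≤ ENNReal.ofReal ((qs.map (fun q => (q.2.2.2 - 1) / (q.2.2.2 + 1))).prod) * 1 :=
            mul_le_mul_right (hDsup1 _ _ hsρ (by rwa [hmap] at hμ1')) _
        _ = ENNReal.ofReal Breal := by rw [mul_one, hprodeq])
    -- now convert
    have hPfin : ∀ (τ : Measure S), IsFiniteMeasure τ →
        (∫⁻ s, compKer lam (List.ofFn k) s Set.univ ∂τ) ≠ 0 →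
        ((∫⁻ s, compKer lam (List.ofFn k) s E ∂τ) /
          (∫⁻ s, compKer lam (List.ofFn k) s Set.univ ∂τ)) ≤ 1 := by
      intro τ hτ hτ0
      refine ENNReal.div_le_of_le_mul ?_
      rw [one_mul]
      exact lintegral_mono fun s => compKer_mono lam _ (Set.subset_univ E) s
    have hP1 := hPfin ρ hρf hρ0
    have hP2 := hPfin ρ' hρ'f hρ'0
    have hP1fin : ((∫⁻ s, compKer lam (List.ofFn k) s E ∂ρ) /
        (∫⁻ s, compKer lam (List.ofFn k) s Set.univ ∂ρ)) ≠ ⊤ :=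
      (hP1.trans_lt ENNReal.one_lt_top).ne
    have hP2fin : ((∫⁻ s, compKer lam (List.ofFn k) s E ∂ρ') /
        (∫⁻ s, compKer lam (List.ofFn k) s Set.univ ∂ρ')) ≠ ⊤ :=
      (hP2.trans_lt ENNReal.one_lt_top).ne
    have hdiv : ∀ (τ : Measure S),
        (∫⁻ s, compKer lam (List.ofFn k) s Set.univ ∂τ)⁻¹ *
          (∫⁻ s, compKer lam (List.ofFn k) s E ∂τ) =
        (∫⁻ s, compKer lam (List.ofFn k) s E ∂τ) /
          (∫⁻ s, compKer lam (List.ofFn k) s Set.univ ∂τ) := by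
      intro τ
      rw [ENNReal.div_eq_inv_mul]
    rw [smul_eq_mul, smul_eq_mul, hdiv ρ, hdiv ρ'] at hbound
    set Pa := (∫⁻ s, compKer lam (List.ofFn k) s E ∂ρ) /
      (∫⁻ s, compKer lam (List.ofFn k) s Set.univ ∂ρ) with hPa
    set Pb := (∫⁻ s, compKer lam (List.ofFn k) s E ∂ρ') /
      (∫⁻ s, compKer lam (List.ofFn k) s Set.univ ∂ρ') with hPb
    rcases le_total Pb Pa with hle | hle
    · have : (Pa - Pb).toReal = Pa.toReal - Pb.toReal :=
        ENNReal.toReal_sub_of_le hle hP1fin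
      rw [← this]
      calc (Pa - Pb).toReal ≤ (ENNReal.ofReal Breal).toReal :=
            ENNReal.toReal_mono ENNReal.ofReal_ne_top hbound
        _ = Breal := ENNReal.toReal_ofReal hBnonneg
    · have : Pa.toReal ≤ Pb.toReal := ENNReal.toReal_mono hP2fin hle
      linarith
  -- assemble
  have hs1 : sSup {d : ℝ | ∃ E : Set S, MeasurableSet E ∧
      d = ((∫⁻ s, compKer lam (List.ofFn k) s E ∂x) / Zx).toReal -
          ((∫⁻ s, compKer lam (List.ofFn k) s E ∂y) / Zy).toReal} ≤ Breal := by
    refine Real.sSup_le ?_ hBnonneg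
    rintro d ⟨E, hE, rfl⟩
    exact hkey x y hxf hyf hZxpos hZxfin hZypos hZyfin hμ1 hν1 E hE
  have hs2 : sSup {d : ℝ | ∃ E : Set S, MeasurableSet E ∧
      d = ((∫⁻ s, compKer lam (List.ofFn k) s E ∂y) / Zy).toReal -
          ((∫⁻ s, compKer lam (List.ofFn k) s E ∂x) / Zx).toReal} ≤ Breal := by
    refine Real.sSup_le ?_ hBnonneg
    rintro d ⟨E, hE, rfl⟩
    exact hkey y x hyf hxf hZypos hZyfin hZxpos hZxfin hν1 hμ1 E hE
  calc _ ≤ Breal + Breal := add_le_add hs1 hs2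
    _ = 2 * Breal := by ring
    _ = 2 * ∏ m, (κ m - 1) / (κ m + 1) := by rw [hBreal]
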